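/- Let $e_1,\dots,e_n$ be random unit vectors in $\mathbb{R}^3$ with $\mathbb{E}[\langle e_i,e_j\rangle] = -1/(n-1)$ for all $i \ne j$, let $v_k = \sum_{i=1}^k e_i$ and $c = \frac1n \sum_{k=1}^n v_k$. Then $\mathbb{E}[\|c\|^2] = \frac{n+1}{12}$. -/
import Mathlib

open MeasureTheory
open scoped InnerProductSpace

private lemma sum_Icc_id' (n : ℕ) : ∑ i ∈ Finset.Icc 1 n, (i:ℝ) = n*(n+1)/2 := by
  induction n with
  | zero => simp
  | succ m ih =>
    rw [Finset.sum_Icc_succ_top (by omega), ih]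
    push_cast; ring

private lemma sum_Icc_sq' (n : ℕ) : ∑ i ∈ Finset.Icc 1 n, (i:ℝ)^2 = n*(n+1)*(2*n+1)/6 := by
  induction n with
  | zero => simp
  | succ m ih =>
    rw [Finset.sum_Icc_succ_top (by omega), ih]
    push_cast; ring

private lemma quad_sum' {α : Type*} [DecidableEq α] (s : Finset α) (c : α → ℝ) (r : ℝ) :
    ∑ i ∈ s, ∑ j ∈ s, c i * c j * (r + if i = j then 1 - r else 0)
      = r * (∑ i ∈ s, c i)^2 + (1 - r) * ∑ i ∈ s, (c i)^2 := by
  have key : ∀ i ∈ s, ∑ j ∈ s, c i * c j * (r + if i = j then 1 - r else 0)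
      = r * (c i * ∑ j ∈ s, c j) + (1 - r) * (c i)^2 := by
    intro i hi
    have h1 : ∀ j, c i * c j * (r + if i = j then 1 - r else 0)
        = c i * c j * r + (if i = j then c i * c j * (1 - r) else 0) := by
      intro j; split <;> ring
    have h2 : r * (c i * ∑ j ∈ s, c j) = ∑ j ∈ s, c i * c j * r := by
      rw [Finset.mul_sum, Finset.mul_sum]
      exact Finset.sum_congr rfl fun j _ => by ring
    simp_rw [h1, Finset.sum_add_distrib, Finset.sum_ite_eq, if_pos hi]
    rw [h2]; ring
  rw [Finset.sum_congr rfl key, Finset.sum_add_distrib, ← Finset.mul_sum,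
    ← Finset.mul_sum, ← Finset.sum_mul]
  ring

/-- For a random ideal ring of length `n ≥ 2`, based at the origin with vertices
`v k = e 1 + ⋯ + e k` and center of mass `c`, the expectation of `‖c‖²` is `(n+1)/12`. -/
theorem expected_center_of_mass (n : ℕ) (hn : 2 ≤ n)
    {Ω : Type*} [MeasurableSpace Ω] (μ : Measure Ω) [IsProbabilityMeasure μ]
    (e : ℕ → Ω → EuclideanSpace ℝ (Fin 3))
    (hunit : ∀ i ∈ Finset.Icc 1 n, ∀ ω, ‖e i ω‖ = 1)
    (hint : ∀ i ∈ Finset.Icc 1 n, ∀ i' ∈ Finset.Icc 1 n,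
      Integrable (fun ω => ⟪e i ω, e i' ω⟫_ℝ) μ)
    (hexp : ∀ i ∈ Finset.Icc 1 n, ∀ i' ∈ Finset.Icc 1 n, i ≠ i' →
      ∫ ω, ⟪e i ω, e i' ω⟫_ℝ ∂μ = -1 / ((n : ℝ) - 1)) :
    ∫ ω, ‖(n : ℝ)⁻¹ • ∑ k ∈ Finset.Icc 1 n, ∑ i ∈ Finset.Icc 1 k, e i ω‖ ^ 2 ∂μ
      = ((n : ℝ) + 1) / 12 := by
  have hn0 : (n:ℝ) ≠ 0 := by positivity
  have hn2 : (2:ℝ) ≤ n := by exact_mod_cast hn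
  have hn1 : (n:ℝ) - 1 ≠ 0 := by linarith
  -- pointwise rewrite of the integrand as a quadratic form
  have hpt : ∀ ω, ‖(n : ℝ)⁻¹ • ∑ k ∈ Finset.Icc 1 n, ∑ i ∈ Finset.Icc 1 k, e i ω‖ ^ 2
      = ∑ i ∈ Finset.Icc 1 n, ∑ j ∈ Finset.Icc 1 n,
          ((n:ℝ)⁻¹ * ((n:ℝ)+1-i)) * ((n:ℝ)⁻¹ * ((n:ℝ)+1-j)) * ⟪e i ω, e j ω⟫_ℝ := by
    intro ω
    have h1 : ∑ k ∈ Finset.Icc 1 n, ∑ i ∈ Finset.Icc 1 k, e i ω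
        = ∑ i ∈ Finset.Icc 1 n, ((n:ℝ)+1-i) • e i ω := by
      rw [Finset.sum_comm' (t' := Finset.Icc 1 n) (s' := fun i => Finset.Icc i n)
        (by intro k i; simp only [Finset.mem_Icc]; omega)]
      refine Finset.sum_congr rfl fun i hi => ?_
      rw [Finset.sum_const, Nat.card_Icc, ← Nat.cast_smul_eq_nsmul ℝ]
      simp only [Finset.mem_Icc] at hi
      congr 1
      push_cast [Nat.cast_sub (by omega : i ≤ n+1)]
      ring
    rw [h1, ← real_inner_self_eq_norm_sq, real_inner_smul_left, real_inner_smul_right,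
      sum_inner]
    simp only [inner_sum, real_inner_smul_left, real_inner_smul_right, Finset.mul_sum]
    refine Finset.sum_congr rfl fun i _ => Finset.sum_congr rfl fun j _ => by ring
  -- exchange integral and sum
  have hEq : ∫ ω, ‖(n : ℝ)⁻¹ • ∑ k ∈ Finset.Icc 1 n, ∑ i ∈ Finset.Icc 1 k, e i ω‖ ^ 2 ∂μ
      = ∑ i ∈ Finset.Icc 1 n, ∑ j ∈ Finset.Icc 1 n,
          ((n:ℝ)⁻¹ * ((n:ℝ)+1-i)) * ((n:ℝ)⁻¹ * ((n:ℝ)+1-j))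
            * ∫ ω, ⟪e i ω, e j ω⟫_ℝ ∂μ := by
    simp_rw [hpt]
    rw [integral_finset_sum _ (fun i hi => integrable_finset_sum _
      (fun j hj => ((hint i hi j hj).const_mul _)))]
    refine Finset.sum_congr rfl fun i hi => ?_
    rw [integral_finset_sum _ (fun j hj => ((hint i hi j hj).const_mul _))]
    exact Finset.sum_congr rfl fun j hj => integral_const_mul _ _
  -- value of each expectation
  have hE : ∀ i ∈ Finset.Icc 1 n, ∀ j ∈ Finset.Icc 1 n,
      (∫ ω, ⟪e i ω, e j ω⟫_ℝ ∂μ)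
        = -1 / ((n:ℝ) - 1) + (if i = j then 1 - (-1 / ((n:ℝ) - 1)) else 0) := by
    intro i hi j hj
    by_cases h : i = j
    · subst h
      rw [if_pos rfl]
      have heq : (fun ω => ⟪e i ω, e i ω⟫_ℝ) = fun _ : Ω => (1:ℝ) := by
        funext ω
        rw [real_inner_self_eq_norm_sq, hunit i hi ω]; norm_num
      rw [heq, integral_const]
      simp
    · rw [hexp i hi j hj h, if_neg h]; ring
  rw [hEq, Finset.sum_congr rfl (fun i hi => Finset.sum_congr rfl
    (fun j hj => by rw [hE i hi j hj])),
    quad_sum' (Finset.Icc 1 n) (fun i => (n:ℝ)⁻¹ * ((n:ℝ)+1-i)) (-1 / ((n:ℝ) - 1))]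
  -- compute the scalar sums
  have hS1 : ∑ i ∈ Finset.Icc 1 n, ((n:ℝ)⁻¹ * ((n:ℝ)+1-(i:ℝ)))
      = (n:ℝ)⁻¹ * ((n:ℝ)*((n:ℝ)+1)/2) := by
    rw [← Finset.mul_sum]
    congr 1
    rw [Finset.sum_sub_distrib, Finset.sum_const, sum_Icc_id']
    simp only [Nat.card_Icc, Nat.add_sub_cancel, nsmul_eq_mul]
    ring
  have hS2 : ∑ i ∈ Finset.Icc 1 n, ((n:ℝ)⁻¹ * ((n:ℝ)+1-(i:ℝ)))^2
      = (n:ℝ)⁻¹^2 * ((n:ℝ)*((n:ℝ)+1)*(2*(n:ℝ)+1)/6) := by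
    have h : ∀ i : ℕ, ((n:ℝ)⁻¹ * ((n:ℝ)+1-(i:ℝ)))^2
        = (n:ℝ)⁻¹^2 * (((n:ℝ)+1)^2 - 2*((n:ℝ)+1)*(i:ℝ) + (i:ℝ)^2) := by
      intro i; ring
    simp_rw [h]
    rw [← Finset.mul_sum]
    congr 1
    rw [Finset.sum_add_distrib, Finset.sum_sub_distrib, Finset.sum_const,
      ← Finset.mul_sum, sum_Icc_id', sum_Icc_sq']
    simp only [Nat.card_Icc, Nat.add_sub_cancel, nsmul_eq_mul]
    ring
  rw [hS1, hS2]
  field_simp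
  ring
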